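/- Let a, b, p, q be positive integers with 1 ≤ n < p, n ≤ q, and b ≤ a ≤ m. Set α = a·φ_n + (p − n)·ψ_a, β = b·φ_n + (q − n)·ψ_b, and δ = a·φ_n + (p − n)·ψ_a + q·ψ_b in ℤ^{n+m}. Then ⟨δ, δ + 2ρ⟩ − ⟨α, α + 2ρ⟩ − ⟨β, β + 2ρ⟩ = −2·b·p·q. -/

import Mathlib

/-! Common definitions: the weight lattice `ℤ^{n+m}` is modeled as functions `ℕ → ℤ`
(only the coordinates `1, …, n+m` are relevant), with standard basis vectors `eps i`.
Index `i` has parity 0 if `i ≤ n` and parity 1 otherwise. -/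

namespace TwoBoundary

/-- The standard basis vector `ε_i` of the weight lattice. -/
def eps (i : ℕ) : ℕ → ℤ := fun k => if k = i then 1 else 0

/-- The sign of the positive root `ε_i − ε_j`: `+1` if it is even
(i.e. the parities of `i` and `j` agree), `−1` if it is odd. -/
def rootSign (n i j : ℕ) : ℤ := if (i ≤ n) = (j ≤ n) then 1 else -1

/-- `2ρ` = (sum of even positive roots) − (sum of odd positive roots). -/
def twoRho (n m : ℕ) : ℕ → ℤ :=
  ∑ i ∈ Finset.Icc 1 (n + m), ∑ j ∈ Finset.Icc 1 (n + m),
    if i < j then rootSign n i j • (eps i - eps j) else 0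

/-- The bilinear form with `⟨ε_i, ε_j⟩ = (−1)^{parity i} δ_{ij}`. -/
def form (n m : ℕ) (μ ν : ℕ → ℤ) : ℤ :=
  ∑ i ∈ Finset.Icc 1 (n + m), (if i ≤ n then (1 : ℤ) else -1) * (μ i * ν i)

/-- `φ_t = ε_1 + ⋯ + ε_t`. -/
def phi (t : ℕ) : ℕ → ℤ := fun k => if 1 ≤ k ∧ k ≤ t then 1 else 0

/-- `ψ_s = ε_{n+1} + ⋯ + ε_{n+s}`. -/
def psi (n s : ℕ) : ℕ → ℤ := fun k => if n + 1 ≤ k ∧ k ≤ n + s then 1 else 0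

/-- A partition, given by its sequence of parts `λ_1 ≥ λ_2 ≥ ⋯` (the index-0 value
is normalized to `0`): weakly decreasing with finitely many nonzero terms. -/
def IsPartition (lam : ℕ → ℕ) : Prop :=
  lam 0 = 0 ∧ (∀ i, 1 ≤ i → lam (i + 1) ≤ lam i) ∧ ∃ N, ∀ i, N ≤ i → lam i = 0

/-- A hook partition (relative to `(n, m)`): a partition with `λ_{n+1} ≤ m`. -/
def IsHookPartition (n m : ℕ) (lam : ℕ → ℕ) : Prop :=
  IsPartition lam ∧ lam (n + 1) ≤ m

/-- The weight `λ̄` associated to a hook partition `λ`: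
`λ̄_i = λ_i` for `1 ≤ i ≤ n`, and `λ̄_{n+j} = #{k > n : λ_k ≥ j}` for `1 ≤ j ≤ m`. -/
noncomputable def barWeight (n m : ℕ) (lam : ℕ → ℕ) : ℕ → ℤ := fun i =>
  if 1 ≤ i ∧ i ≤ n then (lam i : ℤ)
  else if n + 1 ≤ i ∧ i ≤ n + m then ({k : ℕ | n < k ∧ i - n ≤ lam k}.ncard : ℤ)
  else 0

/-- The set `𝒫₀` of partitions occurring in the decomposition of
`L((a^p)) ⊗ L((b^q))` (for `q ≤ p`), by the combinatorial description of
Okada and Stanley. -/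
def InP0 (a b p q : ℕ) (lam : ℕ → ℕ) : Prop :=
  IsPartition lam ∧
  (∀ i, p + q < i → lam i = 0) ∧
  (∀ i, 1 ≤ i → i ≤ q → lam i + lam (p + q + 1 - i) = a + b) ∧
  (∀ i, q + 1 ≤ i → i ≤ p → lam i = a) ∧
  (∀ i, 1 ≤ i → i ≤ q → max a b ≤ lam i)

lemma sum_Icc_split (n m : ℕ) (f : ℕ → ℤ) :
    ∑ k ∈ Finset.Icc 1 (n+m), f k
      = (∑ k ∈ Finset.Icc 1 n, f k) + ∑ j ∈ Finset.Icc 1 m, f (n+j) := by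
  have h : ∀ x : ℕ, Finset.Icc 1 x = Finset.Ioc 0 x := by
    intro x; ext k; simp; omega
  rw [h, h, ← Finset.sum_Ioc_consecutive f (Nat.zero_le n) (Nat.le_add_right n m)]
  congr 1
  rw [show Finset.Ioc n (n+m) = (Finset.Icc 1 m).map (addLeftEmbedding n) from ?_,
    Finset.sum_map]
  · simp [addLeftEmbedding]
  · rw [Finset.map_add_left_Icc]; ext k; simp

lemma sum_if_le' (N t : ℕ) (c : ℤ) (h : t ≤ N) :
    ∑ k ∈ Finset.Icc 1 N, (if k ≤ t then c else 0) = (t : ℤ) * c := by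
  rw [← Finset.sum_filter,
    show (Finset.Icc 1 N).filter (fun k => k ≤ t) = Finset.Icc 1 t from by
      ext k; simp; omega,
    Finset.sum_const, Nat.card_Icc]
  simp [nsmul_eq_mul]

lemma sum_if_lt (N t : ℕ) (c : ℤ) :
    ∑ k ∈ Finset.Icc 1 N, (if t < k then c else 0) = ((N - t : ℕ) : ℤ) * c := by
  rw [← Finset.sum_filter,
    show (Finset.Icc 1 N).filter (fun k => t < k) = Finset.Icc (t+1) N from by
      ext k; simp; omega,
    Finset.sum_const, Nat.card_Icc]
  rw [nsmul_eq_mul]; congr 1; omega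

lemma sum_if_lt2 (N t : ℕ) (c : ℤ) (h : t ≤ N + 1) :
    ∑ k ∈ Finset.Icc 1 N, (if k < t then c else 0) = ((t - 1 : ℕ) : ℤ) * c := by
  rw [← Finset.sum_filter,
    show (Finset.Icc 1 N).filter (fun k => k < t) = Finset.Icc 1 (t-1) from by
      ext k; simp; omega,
    Finset.sum_const, Nat.card_Icc]
  rw [show t - 1 + 1 - 1 = t - 1 from by omega, nsmul_eq_mul]

lemma gauss (N : ℕ) : ∑ k ∈ Finset.Icc 1 N, (2 * (k:ℤ)) = N * (N + 1) := by
  induction N with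
  | zero => simp
  | succ N ih =>
    rw [Finset.sum_Icc_succ_top (by omega), ih]
    push_cast; ring

lemma twoRho_apply (n m k : ℕ) (h1 : 1 ≤ k) (h2 : k ≤ n + m) :
    twoRho n m k
      = if k ≤ n then (n:ℤ) - m + 1 - 2*k else 3*(n:ℤ) + m + 1 - 2*k := by
  have hk : k ∈ Finset.Icc 1 (n+m) := by simp; omega
  unfold twoRho
  simp only [Finset.sum_apply, ite_apply, Pi.smul_apply, Pi.sub_apply, Pi.zero_apply,
    smul_eq_mul]
  have key : ∀ i j : ℕ, (if i < j then rootSign n i j * (eps i k - eps j k) else 0)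
      = (if k = i then (if i < j then rootSign n i j else 0) else 0)
      - (if k = j then (if i < j then rootSign n i j else 0) else 0) := by
    intro i j; unfold eps; split_ifs <;> ring
  rw [Finset.sum_congr rfl fun i _ => Finset.sum_congr rfl fun j _ => key i j]
  simp only [Finset.sum_sub_distrib]
  have pull : ∀ (g : ℕ → ℕ → ℤ) (t : ℕ),
      (∑ j ∈ Finset.Icc 1 (n+m), if k = t then g t j else 0)
        = if k = t then ∑ j ∈ Finset.Icc 1 (n+m), g t j else 0 := by
    intro g t; split_ifs <;> simp
  rw [Finset.sum_congr rfl (fun i _ => pull (fun t j => if t < j then rootSign n t j else 0) i), Finset.sum_ite_eq _ k, if_pos hk]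
  rw [Finset.sum_comm,
    Finset.sum_congr rfl (fun j _ => pull (fun j i => if i < j then rootSign n i j else 0) j),
    Finset.sum_ite_eq _ k, if_pos hk]
  by_cases hkn : k ≤ n
  · rw [if_pos hkn]
    rw [sum_Icc_split n m (fun j => if k < j then rootSign n k j else 0),
        sum_Icc_split n m (fun i => if i < k then rootSign n i k else 0)]
    rw [Finset.sum_congr rfl (fun j hj => show (if k < j then rootSign n k j else 0)
          = (if k < j then (1:ℤ) else 0) from by
        simp only [Finset.mem_Icc] at hj
        unfold rootSign; split_ifs <;> simp_all <;> omega)]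
    rw [sum_if_lt n k 1]
    rw [Finset.sum_congr rfl (fun j hj => show (if k < n + j then rootSign n k (n+j) else 0)
          = (-1 : ℤ) from by
        simp only [Finset.mem_Icc] at hj
        unfold rootSign; split_ifs <;> simp_all <;> omega)]
    rw [Finset.sum_congr rfl (fun i hi => show (if i < k then rootSign n i k else 0)
          = (if i < k then (1:ℤ) else 0) from by
        simp only [Finset.mem_Icc] at hi
        unfold rootSign; split_ifs <;> simp_all <;> omega)]
    rw [sum_if_lt2 n k 1 (by omega)]
    rw [Finset.sum_congr rfl (fun i hi => show (if n + i < k then rootSign n (n+i) k else 0)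
          = (0 : ℤ) from by
        simp only [Finset.mem_Icc] at hi
        split_ifs <;> [omega; rfl])]
    simp only [Finset.sum_const_zero, Finset.sum_const, Nat.card_Icc, nsmul_eq_mul]
    push_cast
    omega
  · rw [if_neg hkn]
    rw [sum_Icc_split n m (fun j => if k < j then rootSign n k j else 0),
        sum_Icc_split n m (fun i => if i < k then rootSign n i k else 0)]
    rw [Finset.sum_congr rfl (fun j hj => show (if k < j then rootSign n k j else 0)
          = (0:ℤ) from by
        simp only [Finset.mem_Icc] at hj
        split_ifs <;> [omega; rfl])]
    rw [Finset.sum_congr rfl (fun j hj => show (if k < n + j then rootSign n k (n+j) else 0)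
          = (if k - n < j then (1:ℤ) else 0) from by
        simp only [Finset.mem_Icc] at hj
        unfold rootSign; split_ifs <;> simp_all <;> omega)]
    rw [sum_if_lt m (k - n) 1]
    rw [Finset.sum_congr rfl (fun i hi => show (if i < k then rootSign n i k else 0)
          = (-1 : ℤ) from by
        simp only [Finset.mem_Icc] at hi
        unfold rootSign; split_ifs <;> simp_all <;> omega)]
    rw [Finset.sum_congr rfl (fun i hi => show (if n + i < k then rootSign n (n+i) k else 0)
          = (if i < k - n then (1:ℤ) else 0) from by
        simp only [Finset.mem_Icc] at hi
        unfold rootSign; split_ifs <;> simp_all <;> omega)]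
    rw [sum_if_lt2 m (k - n) 1 (by omega)]
    simp only [Finset.sum_const_zero, Finset.sum_const, Nat.card_Icc, nsmul_eq_mul]
    push_cast
    omega

lemma form_comm (n m : ℕ) (μ ν : ℕ → ℤ) : form n m μ ν = form n m ν μ := by
  unfold form; exact Finset.sum_congr rfl fun i _ => by ring

lemma form_add_right (n m : ℕ) (μ ν ν' : ℕ → ℤ) :
    form n m μ (ν + ν') = form n m μ ν + form n m μ ν' := by
  unfold form; rw [← Finset.sum_add_distrib]
  exact Finset.sum_congr rfl fun i _ => by simp only [Pi.add_apply]; ring1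

lemma form_add_left (n m : ℕ) (μ μ' ν : ℕ → ℤ) :
    form n m (μ + μ') ν = form n m μ ν + form n m μ' ν := by
  rw [form_comm, form_add_right, form_comm n m ν, form_comm n m ν]

lemma form_smul_right (n m : ℕ) (c : ℤ) (μ ν : ℕ → ℤ) :
    form n m μ (c • ν) = c * form n m μ ν := by
  unfold form; rw [Finset.mul_sum]
  exact Finset.sum_congr rfl fun i _ => by simp only [Pi.smul_apply, smul_eq_mul]; ring1

lemma form_smul_left (n m : ℕ) (c : ℤ) (μ ν : ℕ → ℤ) :
    form n m (c • μ) ν = c * form n m μ ν := by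
  rw [form_comm, form_smul_right, form_comm]

lemma form_phi_phi (n m : ℕ) : form n m (phi n) (phi n) = (n : ℤ) := by
  unfold form
  rw [sum_Icc_split]
  rw [Finset.sum_congr rfl (fun k hk => show
        (if k ≤ n then (1:ℤ) else -1) * (phi n k * phi n k) = 1 from by
      simp only [Finset.mem_Icc] at hk
      unfold phi; split_ifs <;> first | ring1 | omega | (push_cast; first | ring1 | omega))]
  rw [Finset.sum_congr rfl (fun j hj => show
        (if n + j ≤ n then (1:ℤ) else -1) * (phi n (n+j) * phi n (n+j)) = 0 from by
      simp only [Finset.mem_Icc] at hj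
      unfold phi; split_ifs <;> first | ring1 | omega | (push_cast; first | ring1 | omega))]
  simp [Nat.card_Icc]

lemma form_phi_psi (n m s : ℕ) : form n m (phi n) (psi n s) = 0 := by
  unfold form
  rw [Finset.sum_congr rfl (fun k _ => show
        (if k ≤ n then (1:ℤ) else -1) * (phi n k * psi n s k) = 0 from by
      unfold phi psi; split_ifs <;> first | ring1 | omega | (push_cast; first | ring1 | omega))]
  simp

lemma form_psi_phi (n m s : ℕ) : form n m (psi n s) (phi n) = 0 := by
  rw [form_comm]; exact form_phi_psi n m s

lemma form_psi_psi (n m s t : ℕ) (hst : s ≤ t) (ht : t ≤ m) :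
    form n m (psi n s) (psi n t) = -(s : ℤ) := by
  unfold form
  rw [sum_Icc_split]
  rw [Finset.sum_congr rfl (fun k hk => show
        (if k ≤ n then (1:ℤ) else -1) * (psi n s k * psi n t k) = 0 from by
      simp only [Finset.mem_Icc] at hk
      unfold psi; split_ifs <;> first | ring1 | omega | (push_cast; first | ring1 | omega))]
  rw [Finset.sum_congr rfl (fun j hj => show
        (if n + j ≤ n then (1:ℤ) else -1) * (psi n s (n+j) * psi n t (n+j))
          = (if j ≤ s then (-1:ℤ) else 0) from by
      simp only [Finset.mem_Icc] at hj
      unfold psi; split_ifs <;> first | ring1 | omega | (push_cast; first | ring1 | omega))]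
  rw [sum_if_le' m s (-1) (le_trans hst ht)]
  simp

lemma form_phi_twoRho (n m : ℕ) : form n m (phi n) (twoRho n m) = -(n:ℤ) * m := by
  unfold form
  rw [sum_Icc_split]
  rw [Finset.sum_congr rfl (fun k hk => show
        (if k ≤ n then (1:ℤ) else -1) * (phi n k * twoRho n m k)
          = ((n:ℤ) - m + 1) - 2 * k from by
      simp only [Finset.mem_Icc] at hk
      rw [twoRho_apply n m k hk.1 (by omega)]
      unfold phi; split_ifs <;> first | ring1 | omega | (push_cast; first | ring1 | omega))]
  rw [Finset.sum_congr rfl (fun j hj => show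
        (if n + j ≤ n then (1:ℤ) else -1) * (phi n (n+j) * twoRho n m (n+j)) = 0 from by
      simp only [Finset.mem_Icc] at hj
      unfold phi; split_ifs <;> first | ring1 | omega | (push_cast; first | ring1 | omega))]
  rw [Finset.sum_sub_distrib, gauss]
  simp only [Finset.sum_const_zero, Finset.sum_const, Nat.card_Icc, nsmul_eq_mul,
    Nat.add_sub_cancel]
  push_cast; ring

lemma form_psi_twoRho (n m s : ℕ) (hs : s ≤ m) :
    form n m (psi n s) (twoRho n m) = -(s:ℤ) * ((n:ℤ) + m - s) := by
  unfold form
  rw [sum_Icc_split]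
  rw [Finset.sum_congr rfl (fun k hk => show
        (if k ≤ n then (1:ℤ) else -1) * (psi n s k * twoRho n m k) = 0 from by
      simp only [Finset.mem_Icc] at hk
      unfold psi; split_ifs <;> first | ring1 | omega | (push_cast; first | ring1 | omega))]
  rw [Finset.sum_congr rfl (fun j hj => show
        (if n + j ≤ n then (1:ℤ) else -1) * (psi n s (n+j) * twoRho n m (n+j))
          = (if j ≤ s then (2 * (j:ℤ) - ((n:ℤ) + m + 1)) else 0) from by
      simp only [Finset.mem_Icc] at hj
      rw [twoRho_apply n m (n+j) (by omega) (by omega)]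
      unfold psi; split_ifs <;> first | ring1 | omega | (push_cast; first | ring1 | omega) | (exfalso; omega) | push_cast <;> ring)]
  rw [← Finset.sum_filter,
    show (Finset.Icc 1 m).filter (fun j => j ≤ s) = Finset.Icc 1 s from by
      ext k; simp; omega,
    Finset.sum_sub_distrib, gauss]
  simp only [Finset.sum_const_zero, Finset.sum_const, Nat.card_Icc, nsmul_eq_mul,
    Nat.add_sub_cancel, zero_add]
  push_cast; ring

/-- for positive integers `a, b, p, q` with `1 ≤ n < p`, `n ≤ q`,
`b ≤ a ≤ m`, and `α = a·φ_n + (p−n)·ψ_a`, `β = b·φ_n + (q−n)·ψ_b`,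
`δ = a·φ_n + (p−n)·ψ_a + q·ψ_b`, one has
`⟨δ, δ+2ρ⟩ − ⟨α, α+2ρ⟩ − ⟨β, β+2ρ⟩ = −2bpq`. -/
theorem form_kappa_difference_case1 (n m a b p q : ℕ) (hn : 1 ≤ n)
    (ha : 1 ≤ a) (hb : 1 ≤ b) (hp : 1 ≤ p) (hq : 1 ≤ q)
    (hnp : n < p) (hnq : n ≤ q) (hba : b ≤ a) (ham : a ≤ m)
    (α β δ : ℕ → ℤ)
    (hα : α = (a : ℤ) • phi n + ((p : ℤ) - (n : ℤ)) • psi n a)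
    (hβ : β = (b : ℤ) • phi n + ((q : ℤ) - (n : ℤ)) • psi n b)
    (hδ : δ = (a : ℤ) • phi n + ((p : ℤ) - (n : ℤ)) • psi n a + (q : ℤ) • psi n b) :
    form n m δ (δ + twoRho n m) - form n m α (α + twoRho n m)
      - form n m β (β + twoRho n m) = -2 * (b : ℤ) * p * q := by

  have hbm : b ≤ m := le_trans hba ham
  have hψab : form n m (psi n a) (psi n b) = -(b:ℤ) := by
    rw [form_comm]; exact form_psi_psi n m b a hba ham
  have hψba : form n m (psi n b) (psi n a) = -(b:ℤ) := form_psi_psi n m b a hba ham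
  have hψaa : form n m (psi n a) (psi n a) = -(a:ℤ) := form_psi_psi n m a a le_rfl ham
  have hψbb : form n m (psi n b) (psi n b) = -(b:ℤ) := form_psi_psi n m b b le_rfl hbm
  have hψaρ := form_psi_twoRho n m a ham
  have hψbρ := form_psi_twoRho n m b hbm
  subst hα hβ hδ
  simp only [form_add_left, form_add_right, form_smul_left, form_smul_right,
    form_phi_phi, form_phi_psi, form_psi_phi, form_phi_twoRho,
    hψab, hψba, hψaa, hψbb, hψaρ, hψbρ]
  ring

end TwoBoundary
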